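/- Let G be a finite weighted digraph on N nodes with all edge weights positive except a zero-weight self-loop at the goal node N, and suppose every node can reach N. If γ ∈ (0,1) satisfies γ ≥ 1 - C_min/d_max, where C_min is the minimum positive edge weight and d_max = max_p d_G(p,N), then for every node p the minimum discounted cost to reach N along a path (with stage cost at step t discounted by γ^t) is achieved by a path with no repeated nodes. -/

import Mathlib

/-- `l.head? = some p`, `l.getLast? = some g`, and consecutive nodes joined by edges. -/
def IsPathFrom {α : Type*} (E : α → α → Prop) (l : List α) (p g : α) : Prop :=
  l.head? = some p ∧ l.getLast? = some g ∧ l.Chain' E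

/-- Discounted cost of a path: `∑_{t} γ^t W_{p_t p_{t+1}}`. -/
def pathCost {α : Type*} (W : α → α → ℝ) (γ : ℝ) : List α → ℝ
  | [] => 0
  | [_] => 0
  | a :: b :: l => W a b + γ * pathCost W γ (b :: l)

section Helpers
variable {α : Type*} {E : α → α → Prop} {W : α → α → ℝ} {γ : ℝ}

lemma List.chain'_cons {R : α → α → Prop} {a b : α} {l : List α} :
    List.Chain' R (a :: b :: l) ↔ R a b ∧ List.Chain' R (b :: l) := List.isChain_cons_cons

lemma List.chain'_append {R : α → α → Prop} {l₁ l₂ : List α} :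
    List.Chain' R (l₁ ++ l₂) ↔ List.Chain' R l₁ ∧ List.Chain' R l₂ ∧
      ∀ x ∈ l₁.getLast?, ∀ y ∈ l₂.head?, R x y := List.isChain_append

lemma List.chain'_singleton {R : α → α → Prop} (a : α) : List.Chain' R [a] :=
  List.IsChain.singleton a

lemma pathCost_nonneg (hW : ∀ a b, E a b → 0 ≤ W a b) (hγ : 0 ≤ γ) :
    ∀ l : List α, l.Chain' E → 0 ≤ pathCost W γ l
  | [] => fun _ => le_refl 0
  | [_] => fun _ => le_refl 0
  | a :: b :: l => fun h => by
      rw [List.chain'_cons] at h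
      exact add_nonneg (hW a b h.1) (mul_nonneg hγ (pathCost_nonneg hW hγ (b :: l) h.2))

lemma pathCost_le_one (hW : ∀ a b, E a b → 0 ≤ W a b) (hγ0 : 0 ≤ γ) (hγ1 : γ ≤ 1) :
    ∀ l : List α, l.Chain' E → pathCost W γ l ≤ pathCost W 1 l
  | [] => fun _ => le_refl 0
  | [_] => fun _ => le_refl 0
  | a :: b :: l => fun h => by
      rw [List.chain'_cons] at h
      have h1 := pathCost_le_one hW hγ0 hγ1 (b :: l) h.2
      have h2 := pathCost_nonneg hW hγ0 (b :: l) h.2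
      show W a b + γ * pathCost W γ (b :: l) ≤ W a b + 1 * pathCost W 1 (b :: l)
      nlinarith

lemma pathCost_append (x : α) : ∀ (A B : List α),
    pathCost W γ (A ++ x :: B) = pathCost W γ (A ++ [x]) + γ ^ A.length * pathCost W γ (x :: B)
  | [], B => by simp [pathCost]
  | [a], B => by simp [pathCost]
  | a :: c :: A, B => by
      have ih := pathCost_append x (c :: A) B
      rw [List.cons_append] at ih
      simp only [List.cons_append] at ih
      show W a c + γ * pathCost W γ (c :: (A ++ x :: B)) =
        (W a c + γ * pathCost W γ (c :: (A ++ [x]))) + γ ^ (a :: c :: A).length * pathCost W γ (x :: B)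
      rw [ih]
      simp only [List.length_cons, pow_succ]
      ring

lemma pathCost_geom_lb {Cmin : ℝ} (hγ0 : 0 ≤ γ) (hγ1 : γ < 1) :
    ∀ l : List α, l.Chain' (fun a b => Cmin ≤ W a b) →
      Cmin * ((1 - γ ^ (l.length - 1)) / (1 - γ)) ≤ pathCost W γ l
  | [] => fun _ => by simp [pathCost]
  | [_] => fun _ => by simp [pathCost]
  | a :: b :: l => fun h => by
      rw [List.chain'_cons] at h
      have ih := pathCost_geom_lb hγ0 hγ1 (b :: l) h.2
      have hne : (1 : ℝ) - γ ≠ 0 := by linarith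
      have halg : Cmin * ((1 - γ ^ ((a :: b :: l).length - 1)) / (1 - γ))
          = Cmin + γ * (Cmin * ((1 - γ ^ ((b :: l).length - 1)) / (1 - γ))) := by
        simp only [List.length_cons, Nat.add_sub_cancel]
        field_simp
        ring
      rw [halg]
      show _ ≤ W a b + γ * pathCost W γ (b :: l)
      exact add_le_add h.1 (mul_le_mul_of_nonneg_left ih hγ0)

lemma chain'_and {R S : α → α → Prop} {l : List α} (hR : l.Chain' R) (hS : l.Chain' S) :
    l.Chain' (fun a b => R a b ∧ S a b) := by
  unfold List.Chain' at *
  rw [List.isChain_iff_getElem] at hR hS ⊢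
  exact fun i h => ⟨hR i h, hS i h⟩

lemma exists_dup_decomp : ∀ {l : List α}, ¬ l.Nodup → ∃ A x B C, l = A ++ x :: B ++ x :: C := by
  intro l
  induction l with
  | nil => simp
  | cons a l ih =>
    intro h
    by_cases ha : a ∈ l
    · obtain ⟨B, C, rfl⟩ := List.append_of_mem ha
      exact ⟨[], a, B, C, rfl⟩
    · have hn : ¬ l.Nodup := fun hn => h (List.nodup_cons.2 ⟨ha, hn⟩)
      obtain ⟨A, x, B, C, rfl⟩ := ih hn
      exact ⟨a :: A, x, B, C, rfl⟩

end Helpers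

section Decycle
variable {α : Type*} {E : α → α → Prop} {W : α → α → ℝ}

lemma exists_simple_path (hW : ∀ a b, E a b → 0 ≤ W a b) {p gg : α} :
    ∀ (n : ℕ) (l : List α), l.length ≤ n → IsPathFrom E l p gg →
      ∃ l₂, IsPathFrom E l₂ p gg ∧ l₂.Nodup ∧ pathCost W 1 l₂ ≤ pathCost W 1 l := by
  intro n
  induction n with
  | zero =>
    intro l hlen hl
    have hnil : l = [] := List.length_eq_zero_iff.mp (Nat.le_zero.mp hlen)
    subst hnil
    exact absurd hl.1 (by simp)
  | succ n ih =>
    intro l hlen hl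
    by_cases hnd : l.Nodup
    · exact ⟨l, hl, hnd, le_refl _⟩
    · obtain ⟨A, x, B, C, rfl⟩ := exists_dup_decomp hnd
      obtain ⟨hh, hlast, hch⟩ := hl
      -- chain decompositions
      rw [List.chain'_append] at hch
      obtain ⟨h1, h2, h3⟩ := hch
      rw [List.chain'_append] at h1
      obtain ⟨hA, hxB, hlink⟩ := h1
      -- the shortened list
      have hpath2 : IsPathFrom E (A ++ x :: C) p gg := by
        refine ⟨?_, ?_, ?_⟩
        · cases A with
          | nil => simpa using hh
          | cons a A' => simpa using hh
        · rw [List.getLast?_append_cons]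
          rw [List.getLast?_append_of_ne_nil _ (by simp : (x :: C) ≠ [])] at hlast
          exact hlast
        · rw [List.chain'_append]
          refine ⟨hA, h2, ?_⟩
          intro a ha b hb
          simp only [List.head?_cons, Option.mem_def, Option.some.injEq] at hb
          subst hb
          exact hlink a ha x (by simp)
      -- cost comparison
      have hmidnn : 0 ≤ pathCost W 1 ((x :: B) ++ [x]) := by
        apply pathCost_nonneg hW zero_le_one
        rw [List.chain'_append]
        refine ⟨hxB, List.chain'_singleton x, ?_⟩
        intro a ha b hb
        simp only [List.head?_cons, Option.mem_def, Option.some.injEq] at hb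
        subst hb
        exact h3 a (by rwa [List.getLast?_append_of_ne_nil _ (by simp : (x :: B) ≠ [])]) x (by simp)
      have hcost : pathCost W 1 (A ++ x :: C) ≤ pathCost W 1 (A ++ (x :: B) ++ x :: C) := by
        have e1 : A ++ (x :: B) ++ x :: C = A ++ x :: (B ++ x :: C) := by simp
        have e2 : (x :: (B ++ x :: C) : List α) = (x :: B) ++ x :: C := by simp
        rw [e1, pathCost_append x A C, pathCost_append x A (B ++ x :: C), e2,
          pathCost_append x (x :: B) C]
        simp only [one_pow, one_mul]
        linarith
      have hlen2 : (A ++ x :: C).length ≤ n := by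
        simp only [List.length_append, List.length_cons] at hlen ⊢
        omega
      obtain ⟨l₂, hl₂, hnd₂, hle₂⟩ := ih (A ++ x :: C) hlen2 hpath2
      exact ⟨l₂, hl₂, hnd₂, hle₂.trans hcost⟩

end Decycle

/-- On a finite weighted digraph with positive edge weights
(except a zero-cost self-loop at the goal `g`), if every node can reach `g`
and `γ ∈ (0,1)` satisfies `γ ≥ 1 - Cmin / dmax`, then for every node `p` the
minimum discounted cost to reach `g` is achieved by a path with no repeated
nodes. -/
theorem optimal_discounted_path_is_simple {N : ℕ} (g : Fin N)
    (E : Fin N → Fin N → Prop) (W : Fin N → Fin N → ℝ)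
    (Cmin dmax γ : ℝ) (hCmin : 0 < Cmin)
    (hWpos : ∀ i j : Fin N, E i j → (i, j) ≠ (g, g) → Cmin ≤ W i j)
    (hself : E g g ∧ W g g = 0)
    (dG : Fin N → ℝ)
    (hdG : ∀ p : Fin N,
      IsLeast {c : ℝ | ∃ l : List (Fin N), IsPathFrom E l p g ∧ pathCost W 1 l = c} (dG p))
    (hdmax : ∀ p : Fin N, dG p ≤ dmax)
    (hγ0 : 0 < γ) (hγ1 : γ < 1) (hγc : 1 - Cmin / dmax ≤ γ) :
    ∀ p : Fin N, ∃ l : List (Fin N), IsPathFrom E l p g ∧ l.Nodup ∧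
      ∀ l' : List (Fin N), IsPathFrom E l' p g → pathCost W γ l ≤ pathCost W γ l' := by
  have hWnn : ∀ a b, E a b → 0 ≤ W a b := by
    intro a b h
    by_cases hab : (a, b) = (g, g)
    · obtain ⟨h1, h2⟩ := Prod.mk.injEq a b g g ▸ hab
      rw [h1, h2, hself.2]
    · exact hCmin.le.trans (hWpos a b h hab)
  -- dG g = 0 and dmax > 0
  have hgpath : IsPathFrom E [g] g g := ⟨rfl, rfl, List.chain'_singleton g⟩
  have hdgle : dG g ≤ 0 := (hdG g).2 ⟨[g], hgpath, rfl⟩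
  have hdgge : 0 ≤ dG g := by
    obtain ⟨l, hl, hc⟩ := (hdG g).1
    rw [← hc]
    exact pathCost_nonneg hWnn zero_le_one l hl.2.2
  have hdmax0 : (0:ℝ) ≤ dmax := by linarith [hdmax g]
  rcases eq_or_lt_of_le hdmax0 with heq | hd
  · exfalso
    rw [← heq, div_zero] at hγc
    linarith
  have key : (1 - γ) * dmax ≤ Cmin := by
    have h1γ : 1 - γ ≤ Cmin / dmax := by linarith
    exact (le_div_iff₀ hd).mp h1γ
  -- existence of simple paths with small undiscounted cost
  have hsimp : ∀ a : Fin N, ∃ l, (IsPathFrom E l a g ∧ l.Nodup) ∧ pathCost W 1 l ≤ dG a := by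
    intro a
    obtain ⟨l, hl, hc⟩ := (hdG a).1
    obtain ⟨l₂, h₂, hnd, hle⟩ := exists_simple_path hWnn l.length l le_rfl hl
    exact ⟨l₂, ⟨h₂, hnd⟩, hc ▸ hle⟩
  -- optimal simple paths
  have hmin : ∀ a : Fin N, ∃ mm, (IsPathFrom E mm a g ∧ mm.Nodup) ∧
      ∀ l, (IsPathFrom E l a g ∧ l.Nodup) → pathCost W γ mm ≤ pathCost W γ l := by
    intro a
    have hfin : {l : List (Fin N) | IsPathFrom E l a g ∧ l.Nodup}.Finite := by
      apply (List.finite_length_le (Fin N) N).subset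
      intro l hl
      have := hl.2.length_le_card
      simpa using this
    obtain ⟨l0, h0, _⟩ := hsimp a
    obtain ⟨mm, hmm, hmmle⟩ := Set.exists_min_image _ (pathCost W γ) hfin ⟨l0, h0⟩
    exact ⟨mm, hmm, fun l hl => hmmle l hl⟩
  choose m hm hmle using hmin
  set V : Fin N → ℝ := fun a => pathCost W γ (m a) with hV
  have hVle : ∀ a, V a ≤ dmax := by
    intro a
    obtain ⟨l₂, ⟨h₂, hnd⟩, hle⟩ := hsimp a
    have h3 := hmle a l₂ ⟨h₂, hnd⟩
    have h4 := pathCost_le_one hWnn hγ0.le hγ1.le l₂ h₂.2.2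
    exact h3.trans (h4.trans (hle.trans (hdmax a)))
  have hVnn : ∀ a, 0 ≤ V a := fun a => pathCost_nonneg hWnn hγ0.le _ (hm a).1.2.2
  have hVg : V g ≤ 0 := hmle g [g] ⟨hgpath, List.nodup_singleton g⟩
  -- Bellman inequality
  have bellman : ∀ a b, E a b → V a ≤ W a b + γ * V b := by
    intro a b hab
    by_cases hag : a = g
    · subst hag
      have := add_nonneg (hWnn _ _ hab) (mul_nonneg hγ0.le (hVnn b))
      linarith
    · have hCW : Cmin ≤ W a b := hWpos a b hab (by
        intro hcon
        exact hag (congrArg Prod.fst hcon))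
      obtain ⟨hmh, hml, hmc⟩ := (hm b).1
      have hmnd := (hm b).2
      obtain ⟨t, ht⟩ : ∃ t, m b = b :: t := by
        cases hmb : m b with
        | nil => rw [hmb] at hmh; simp at hmh
        | cons c t =>
          rw [hmb] at hmh
          simp only [List.head?_cons, Option.some.injEq] at hmh
          exact ⟨t, by rw [hmh]⟩
      by_cases ham : a ∈ m b
      · -- a occurs on the optimal simple path from b : split and use suffix
        obtain ⟨A, Bb, hAB⟩ := List.append_of_mem ham
        have hmc' : (A ++ a :: Bb).Chain' E := hAB ▸ hmc
        rw [List.chain'_append] at hmc'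
        have hsfx_last : (a :: Bb).getLast? = some g := by
          rw [hAB, List.getLast?_append_cons] at hml
          exact hml
        have hsfx_nd : (a :: Bb).Nodup :=
          (List.sublist_append_right A (a :: Bb)).nodup (hAB ▸ hmnd)
        have hVaT : V a ≤ pathCost W γ (a :: Bb) :=
          hmle a _ ⟨⟨rfl, hsfx_last, hmc'.2.1⟩, hsfx_nd⟩
        have hdec : pathCost W γ (m b)
            = pathCost W γ (A ++ [a]) + γ ^ A.length * pathCost W γ (a :: Bb) := by
          rw [hAB]; exact pathCost_append a A Bb
        -- every edge on the nodup path m b has weight ≥ Cmin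
        have hPm : (m b).Chain' (fun u v => Cmin ≤ W u v) := by
          have hne : (m b).Chain' (fun u v : Fin N => u ≠ v) :=
            List.Pairwise.isChain hmnd
          refine (chain'_and hmc hne).imp ?_
          intro u v huv
          refine hWpos u v huv.1 ?_
          intro hcon
          exact huv.2 (by
            have h1 := congrArg Prod.fst hcon
            have h2 := congrArg Prod.snd hcon
            simp only at h1 h2
            rw [h1, h2])
        have hPpre : (A ++ [a]).Chain' (fun u v => Cmin ≤ W u v) := by
          have he : m b = (A ++ [a]) ++ Bb := by rw [hAB]; simp
          rw [he, List.chain'_append] at hPm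
          exact hPm.1
        have hpref := pathCost_geom_lb hγ0.le hγ1 (A ++ [a]) hPpre
        rw [show (A ++ [a]).length - 1 = A.length by simp] at hpref
        -- arithmetic
        set n := A.length with hn
        set T := pathCost W γ (a :: Bb) with hT
        set Pref := pathCost W γ (A ++ [a]) with hPref
        have hγne : (1:ℝ) - γ ≠ 0 := by linarith
        have h1 : Cmin * ((1 - γ ^ (n+1)) / (1 - γ)) ≤ W a b + γ * Pref := by
          have halg : Cmin * ((1 - γ ^ (n+1)) / (1 - γ))
              = Cmin + γ * (Cmin * ((1 - γ ^ n) / (1 - γ))) := by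
            field_simp
            ring
          rw [halg]
          exact add_le_add hCW (mul_le_mul_of_nonneg_left hpref hγ0.le)
        have hpow1 : γ ^ (n+1) ≤ 1 := pow_le_one₀ hγ0.le hγ1.le
        have hpownn : (0:ℝ) ≤ γ ^ (n+1) := pow_nonneg hγ0.le _
        have hdm : dmax ≤ Cmin / (1 - γ) := by
          rw [le_div_iff₀ (by linarith : (0:ℝ) < 1 - γ)]
          linarith
        have h2 : dmax * (1 - γ ^ (n+1)) ≤ Cmin * ((1 - γ ^ (n+1)) / (1 - γ)) := by
          have : Cmin * ((1 - γ ^ (n+1)) / (1 - γ)) = (Cmin / (1 - γ)) * (1 - γ ^ (n+1)) := by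
            ring
          rw [this]
          exact mul_le_mul_of_nonneg_right hdm (by linarith)
        have h3 : V a * (1 - γ ^ (n+1)) ≤ dmax * (1 - γ ^ (n+1)) :=
          mul_le_mul_of_nonneg_right (hVle a) (by linarith)
        have hfin : V a ≤ W a b + γ * (Pref + γ ^ n * T) := by
          have h4 : γ ^ (n+1) * V a ≤ γ ^ (n+1) * T :=
            mul_le_mul_of_nonneg_left hVaT hpownn
          have e : W a b + γ * (Pref + γ ^ n * T) = (W a b + γ * Pref) + γ ^ (n+1) * T := by
            rw [pow_succ]
            ring
          rw [e]
          calc V a = V a * (1 - γ ^ (n+1)) + γ ^ (n+1) * V a := by ring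
            _ ≤ (W a b + γ * Pref) + γ ^ (n+1) * T :=
              add_le_add ((h3.trans h2).trans h1) h4
        calc V a ≤ W a b + γ * (Pref + γ ^ n * T) := hfin
          _ = W a b + γ * V b := by rw [hV]; simp only; rw [hdec]
      · -- a does not occur on m b : prepend it
        have hcand : IsPathFrom E (a :: m b) a g := by
          refine ⟨rfl, ?_, ?_⟩
          · rw [ht, List.getLast?_cons_cons, ← ht]
            exact hml
          · rw [ht, List.chain'_cons]
            exact ⟨hab, ht ▸ hmc⟩
        have hcandnd : (a :: m b).Nodup := List.nodup_cons.2 ⟨ham, hmnd⟩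
        have h5 : V a ≤ pathCost W γ (a :: m b) := hmle a _ ⟨hcand, hcandnd⟩
        have h6 : pathCost W γ (a :: m b) = W a b + γ * V b := by
          rw [ht]
          show W a b + γ * pathCost W γ (b :: t) = W a b + γ * V b
          rw [hV]; simp only; rw [ht]
        linarith
  -- main induction on path length
  have main : ∀ (n : ℕ) (a : Fin N) (l : List (Fin N)), l.length ≤ n →
      IsPathFrom E l a g → V a ≤ pathCost W γ l := by
    intro n
    induction n with
    | zero =>
      intro a l hlen hl
      have : l = [] := List.length_eq_zero_iff.mp (Nat.le_zero.mp hlen)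
      subst this
      exact absurd hl.1 (by simp)
    | succ n ih =>
      intro a l hlen hl
      obtain ⟨hh, hlast, hch⟩ := hl
      match l with
      | [] => simp at hh
      | [x] =>
        have hxa : x = a := by simpa using hh
        have hxg : x = g := by simpa using hlast
        have : V a ≤ 0 := by rw [← hxa, hxg]; exact hVg
        exact this.trans (le_of_eq rfl)
      | x :: y :: tl =>
        have hxa : x = a := by simpa using hh
        subst hxa
        rw [List.chain'_cons] at hch
        have hpath : IsPathFrom E (y :: tl) y g :=
          ⟨rfl, by rw [List.getLast?_cons_cons] at hlast; exact hlast, hch.2⟩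
        have hlen' : (y :: tl).length ≤ n := by
          simp only [List.length_cons] at hlen ⊢
          omega
        have hIH := ih y (y :: tl) hlen' hpath
        calc V x ≤ W x y + γ * V y := bellman x y hch.1
          _ ≤ W x y + γ * pathCost W γ (y :: tl) := by nlinarith
          _ = pathCost W γ (x :: y :: tl) := rfl
  intro p
  exact ⟨m p, (hm p).1, (hm p).2, fun l' hl' => main l'.length p l' le_rfl hl'⟩
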